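/- Let ℓ ≥ 1, t ∈ (0,1], and let (a₁, p₁), …, (a_ℓ, p_ℓ) be a sequence of pairs where the a-indices a_j ∈ {1,…,m} are nondecreasing and the p-indices p_j ∈ {1,…,n} are nondecreasing. Then the number of pairs of indices (j, j') with j ≤ j' such that a_{j'} − a_j ≤ tm and p_{j'} − p_j ≤ tn is at least tℓ²/16. -/

import Mathlib

open Finset

lemma stmt12_mono_of_step (ℓ : ℕ) (a : ℕ → ℕ)
    (h : ∀ j, 1 ≤ j → j < ℓ → a j ≤ a (j + 1)) :
    ∀ j j', 1 ≤ j → j ≤ j' → j' ≤ ℓ → a j ≤ a j' := by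
  intro j j'
  induction j' with
  | zero => intro h1 h2 _; omega
  | succ k ih =>
    intro h1 h2 h3
    rcases Nat.eq_or_lt_of_le h2 with he | hlt
    · rw [he]
    · exact le_trans (ih h1 (by omega) (by omega)) (h k (by omega) (by omega))

lemma stmt12_pair_count (s : Finset ℕ) :
    s.card ^ 2 ≤ 2 * ((s ×ˢ s).filter (fun x => x.1 ≤ x.2)).card := by
  have hswap : ((s ×ˢ s).filter (fun x => x.2 ≤ x.1)).card
      = ((s ×ˢ s).filter (fun x => x.1 ≤ x.2)).card := by
    apply Finset.card_bij' (fun x _ => x.swap) (fun x _ => x.swap) <;>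
      intro x hx <;> simp [Finset.mem_filter, Finset.mem_product] at hx ⊢ <;> tauto
  have hsub : s ×ˢ s ⊆ ((s ×ˢ s).filter (fun x => x.1 ≤ x.2))
      ∪ ((s ×ˢ s).filter (fun x => x.2 ≤ x.1)) := by
    intro x hx
    rcases le_total x.1 x.2 with h | h
    · exact Finset.mem_union_left _ (Finset.mem_filter.2 ⟨hx, h⟩)
    · exact Finset.mem_union_right _ (Finset.mem_filter.2 ⟨hx, h⟩)
  calc s.card ^ 2 = (s ×ˢ s).card := by rw [Finset.card_product, sq]
    _ ≤ _ := Finset.card_le_card hsub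
    _ ≤ _ + _ := Finset.card_union_le _ _
    _ = 2 * _ := by rw [hswap]; ring

/-- Along a doubly monotone list of length ℓ, at least tℓ²/16 ordered pairs
of positions are simultaneously t-close in both coordinates. -/
theorem stmt_12 (ℓ m n : ℕ) (hℓ : 1 ≤ ℓ) (hm : 1 ≤ m) (hn : 1 ≤ n)
    (t : ℝ) (ht0 : 0 < t) (ht1 : t ≤ 1)
    (a p : ℕ → ℕ)
    (ha_mono : ∀ j, 1 ≤ j → j < ℓ → a j ≤ a (j + 1))
    (hp_mono : ∀ j, 1 ≤ j → j < ℓ → p j ≤ p (j + 1))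
    (ha_range : ∀ j ∈ Finset.Icc 1 ℓ, a j ∈ Finset.Icc 1 m)
    (hp_range : ∀ j ∈ Finset.Icc 1 ℓ, p j ∈ Finset.Icc 1 n) :
    t * ℓ ^ 2 / 16 ≤
      (Set.ncard {x : ℕ × ℕ | 1 ≤ x.1 ∧ x.1 ≤ x.2 ∧ x.2 ≤ ℓ ∧
        (a x.2 : ℝ) - (a x.1 : ℝ) ≤ t * m ∧
        (p x.2 : ℝ) - (p x.1 : ℝ) ≤ t * n} : ℝ) := by
  have htm : (0:ℝ) < t * m := by positivity
  have htn : (0:ℝ) < t * n := by positivity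
  set S : Set (ℕ × ℕ) := {x : ℕ × ℕ | 1 ≤ x.1 ∧ x.1 ≤ x.2 ∧ x.2 ≤ ℓ ∧
        (a x.2 : ℝ) - (a x.1 : ℝ) ≤ t * m ∧
        (p x.2 : ℝ) - (p x.1 : ℝ) ≤ t * n} with hS
  have ha_mono' := stmt12_mono_of_step ℓ a ha_mono
  have hp_mono' := stmt12_mono_of_step ℓ p hp_mono
  set A : ℕ → ℤ := fun j => ⌊((a j : ℝ) - 1) / (t * m)⌋ with hAdef
  set P : ℕ → ℤ := fun j => ⌊((p j : ℝ) - 1) / (t * n)⌋ with hPdef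
  set H : ℕ → ℤ := fun j => A j + P j with hHdef
  set F : Finset ℕ := Finset.Icc 1 ℓ with hFdef
  -- range facts
  have haR : ∀ j ∈ F, 1 ≤ a j ∧ a j ≤ m := by
    intro j hj; have := ha_range j hj; simp [Finset.mem_Icc] at this; exact this
  have hpR : ∀ j ∈ F, 1 ≤ p j ∧ p j ≤ n := by
    intro j hj; have := hp_range j hj; simp [Finset.mem_Icc] at this; exact this
  -- monotonicity of A and P
  have hAmono : ∀ j j', j ∈ F → j' ∈ F → j ≤ j' → A j ≤ A j' := by
    intro j j' hj hj' hle
    simp [hFdef, Finset.mem_Icc] at hj hj'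
    apply Int.floor_le_floor
    have : (a j : ℝ) ≤ (a j' : ℝ) := by
      exact_mod_cast ha_mono' j j' hj.1 hle hj'.2
    gcongr
  have hPmono : ∀ j j', j ∈ F → j' ∈ F → j ≤ j' → P j ≤ P j' := by
    intro j j' hj hj' hle
    simp [hFdef, Finset.mem_Icc] at hj hj'
    apply Int.floor_le_floor
    have : (p j : ℝ) ≤ (p j' : ℝ) := by
      exact_mod_cast hp_mono' j j' hj.1 hle hj'.2
    gcongr
  -- bounds on A and P
  have hA0 : ∀ j ∈ F, 0 ≤ A j := by
    intro j hj
    apply Int.floor_nonneg.2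
    have h1 : (1:ℝ) ≤ (a j : ℝ) := by exact_mod_cast (haR j hj).1
    exact div_nonneg (by linarith) (le_of_lt htm)
  have hP0 : ∀ j ∈ F, 0 ≤ P j := by
    intro j hj
    apply Int.floor_nonneg.2
    have h1 : (1:ℝ) ≤ (p j : ℝ) := by exact_mod_cast (hpR j hj).1
    exact div_nonneg (by linarith) (le_of_lt htn)
  have hAtop : ∀ j ∈ F, A j ≤ ⌊1/t⌋ := by
    intro j hj
    apply Int.floor_le_floor
    have hle : (a j : ℝ) ≤ (m : ℝ) := by exact_mod_cast (haR j hj).2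
    rw [div_le_div_iff₀ htm ht0]
    have hm1 : (1:ℝ) ≤ (m:ℝ) := by exact_mod_cast hm
    nlinarith
  have hPtop : ∀ j ∈ F, P j ≤ ⌊1/t⌋ := by
    intro j hj
    apply Int.floor_le_floor
    have hle : (p j : ℝ) ≤ (n : ℝ) := by exact_mod_cast (hpR j hj).2
    rw [div_le_div_iff₀ htn ht0]
    have hn1 : (1:ℝ) ≤ (n:ℝ) := by exact_mod_cast hn
    nlinarith
  -- key closeness fact
  have hclose : ∀ j j', j ∈ F → j' ∈ F → j ≤ j' → H j = H j' →
      ((a j' : ℝ) - (a j : ℝ) ≤ t * m ∧ (p j' : ℝ) - (p j : ℝ) ≤ t * n) := by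
    intro j j' hj hj' hle hH
    have hA := hAmono j j' hj hj' hle
    have hP := hPmono j j' hj hj' hle
    have hAeq : A j = A j' := by simp [hHdef] at hH; omega
    have hPeq : P j = P j' := by simp [hHdef] at hH; omega
    constructor
    · have h1 : ((a j' : ℝ) - 1) / (t * m) < A j + 1 := by
        rw [hAeq]; exact Int.lt_floor_add_one _
      have h2 : (A j : ℝ) ≤ ((a j : ℝ) - 1) / (t * m) := Int.floor_le _
      have h3 : ((a j' : ℝ) - 1) / (t * m) - ((a j : ℝ) - 1) / (t * m) < 1 := by linarith
      rw [div_sub_div_same] at h3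
      have h4 : ((a j' : ℝ) - (a j : ℝ)) / (t * m) < 1 := by
        rw [show ((a j' : ℝ) - (a j : ℝ)) = (a j' : ℝ) - 1 - ((a j : ℝ) - 1) by ring]
        exact h3
      have := (div_lt_one htm).1 h4
      linarith
    · have h1 : ((p j' : ℝ) - 1) / (t * n) < P j + 1 := by
        rw [hPeq]; exact Int.lt_floor_add_one _
      have h2 : (P j : ℝ) ≤ ((p j : ℝ) - 1) / (t * n) := Int.floor_le _
      have h3 : ((p j' : ℝ) - 1) / (t * n) - ((p j : ℝ) - 1) / (t * n) < 1 := by linarith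
      rw [div_sub_div_same] at h3
      have h4 : ((p j' : ℝ) - (p j : ℝ)) / (t * n) < 1 := by
        rw [show ((p j' : ℝ) - (p j : ℝ)) = (p j' : ℝ) - 1 - ((p j : ℝ) - 1) by ring]
        exact h3
      have := (div_lt_one htn).1 h4
      linarith
  -- the good pairs finset
  set T : Finset (ℕ × ℕ) :=
    (F ×ˢ F).filter (fun x => x.1 ≤ x.2 ∧ H x.1 = H x.2) with hTdef
  have hTsub : (↑T : Set (ℕ × ℕ)) ⊆ S := by
    intro x hx
    simp only [hTdef, Finset.coe_filter, Set.mem_setOf_eq, Finset.mem_product] at hx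
    obtain ⟨⟨h1, h2⟩, hle, hHeq⟩ := hx
    have hc := hclose x.1 x.2 h1 h2 hle hHeq
    simp [hFdef, Finset.mem_Icc] at h1 h2
    exact ⟨h1.1, hle, h2.2, hc.1, hc.2⟩
  have hSfin : S.Finite := by
    apply Set.Finite.subset ((Set.finite_Icc 1 ℓ).prod (Set.finite_Icc 1 ℓ))
    rintro ⟨x1, x2⟩ ⟨h1, h2, h3, _, _⟩
    exact ⟨⟨h1, le_trans h2 h3⟩, ⟨le_trans h1 h2, h3⟩⟩
  have hTS : (T.card : ℝ) ≤ (S.ncard : ℝ) := by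
    have := Set.ncard_le_ncard hTsub hSfin
    rw [Set.ncard_coe_finset] at this
    exact_mod_cast this
  -- fiberwise decomposition
  set V : Finset ℤ := F.image H with hVdef
  have hcardT : T.card = ∑ v ∈ V,
      (((F.filter (fun j => H j = v)) ×ˢ (F.filter (fun j => H j = v))).filter
        (fun x => x.1 ≤ x.2)).card := by
    rw [Finset.card_eq_sum_card_fiberwise (f := fun x : ℕ × ℕ => H x.1) (t := V)]
    · apply Finset.sum_congr rfl
      intro v _
      congr 1
      ext x
      simp only [hTdef, Finset.mem_filter, Finset.mem_product]
      constructor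
      · rintro ⟨⟨⟨hx1, hx2⟩, hle, hHeq⟩, hv⟩
        exact ⟨⟨⟨hx1, hv⟩, ⟨hx2, by omega⟩⟩, hle⟩
      · rintro ⟨⟨⟨hx1, hv1⟩, ⟨hx2, hv2⟩⟩, hle⟩
        exact ⟨⟨⟨hx1, hx2⟩, hle, by omega⟩, hv1⟩
    · intro x hx
      simp only [Finset.mem_coe, hTdef, Finset.mem_filter, Finset.mem_product] at hx
      exact Finset.mem_image_of_mem H hx.1.1
  have hcardF : F.card = ∑ v ∈ V, (F.filter (fun j => H j = v)).card :=
    Finset.card_eq_sum_card_fiberwise (fun j hj => Finset.mem_image_of_mem H hj)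
  have hFcard : F.card = ℓ := by simp [hFdef]
  -- Cauchy–Schwarz over the fibers, in ℝ
  have hCS : ((ℓ : ℝ)) ^ 2 ≤ (V.card : ℝ) * (2 * T.card) := by
    have h1 : ((ℓ : ℝ)) ^ 2 = (∑ v ∈ V, ((F.filter (fun j => H j = v)).card : ℝ)) ^ 2 := by
      rw [← Nat.cast_sum, ← hcardF, hFcard]
    have h2 : (∑ v ∈ V, ((F.filter (fun j => H j = v)).card : ℝ)) ^ 2 ≤
        (V.card : ℝ) * ∑ v ∈ V, ((F.filter (fun j => H j = v)).card : ℝ) ^ 2 :=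
      sq_sum_le_card_mul_sum_sq
    have h3 : ∑ v ∈ V, ((F.filter (fun j => H j = v)).card : ℝ) ^ 2 ≤
        ∑ v ∈ V, (2 * ((((F.filter (fun j => H j = v)) ×ˢ (F.filter (fun j => H j = v))).filter
          (fun x => x.1 ≤ x.2)).card : ℝ)) := by
      apply Finset.sum_le_sum
      intro v _
      exact_mod_cast stmt12_pair_count (F.filter (fun j => H j = v))
    have h4 : ∑ v ∈ V, (2 * ((((F.filter (fun j => H j = v)) ×ˢ (F.filter (fun j => H j = v))).filter
          (fun x => x.1 ≤ x.2)).card : ℝ)) = 2 * (T.card : ℝ) := by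
      rw [← Finset.mul_sum, hcardT]
      push_cast
      ring
    have hVnn : (0:ℝ) ≤ (V.card : ℝ) := by positivity
    calc ((ℓ:ℝ))^2 = _ := h1
      _ ≤ _ := h2
      _ ≤ (V.card : ℝ) * ∑ v ∈ V, (2 * ((((F.filter (fun j => H j = v)) ×ˢ
            (F.filter (fun j => H j = v))).filter (fun x => x.1 ≤ x.2)).card : ℝ)) := by
          exact mul_le_mul_of_nonneg_left h3 hVnn
      _ = (V.card : ℝ) * (2 * T.card) := by rw [h4]
  -- bound on the number of fibers
  have hVbound : (V.card : ℝ) ≤ 3 / t := by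
    have hsub : V ⊆ Finset.Icc (0:ℤ) (2 * ⌊1/t⌋) := by
      intro v hv
      simp only [hVdef, Finset.mem_image] at hv
      obtain ⟨j, hj, rfl⟩ := hv
      have := hA0 j hj; have := hP0 j hj; have := hAtop j hj; have := hPtop j hj
      simp only [Finset.mem_Icc, hHdef]
      omega
    have hfl0 : (0:ℤ) ≤ ⌊1/t⌋ := Int.floor_nonneg.2 (by positivity)
    have hc : (V.card : ℤ) ≤ 2 * ⌊1/t⌋ + 1 := by
      have h := Finset.card_le_card hsub
      rw [Int.card_Icc] at h
      omega
    have hcR : (V.card : ℝ) ≤ 2 * (⌊1/t⌋ : ℝ) + 1 := by exact_mod_cast hc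
    have hfl : (⌊1/t⌋ : ℝ) ≤ 1/t := Int.floor_le _
    have h1t : (1:ℝ) ≤ 1/t := by rw [le_div_iff₀ ht0]; linarith
    calc (V.card : ℝ) ≤ 2 * (⌊1/t⌋ : ℝ) + 1 := hcR
      _ ≤ 2 * (1/t) + 1/t := by linarith
      _ = 3 / t := by ring
  -- put it together
  have hT0 : (0:ℝ) ≤ (T.card : ℝ) := by positivity
  have hmain : t * (ℓ:ℝ)^2 ≤ 6 * (T.card : ℝ) := by
    have h1 : t * ((ℓ:ℝ))^2 ≤ t * ((V.card : ℝ) * (2 * T.card)) :=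
      mul_le_mul_of_nonneg_left hCS (le_of_lt ht0)
    have h2 : t * (V.card : ℝ) ≤ 3 := by
      have := mul_le_mul_of_nonneg_left hVbound (le_of_lt ht0)
      rwa [mul_div_cancel₀ 3 (ne_of_gt ht0)] at this
    nlinarith
  have : t * (ℓ:ℝ)^2 / 16 ≤ (T.card : ℝ) := by linarith
  exact le_trans this hTS
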